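/- Let z₁, z₂, z₃, z₄ be four distinct points in the complex plane forming a convex quadrilateral (in this cyclic order), with side and diagonal lengths a = |z₂−z₃|, b = |z₁−z₃|, c = |z₁−z₂|, d = |z₁−z₄|, e = |z₂−z₄|, f = |z₃−z₄|, and let A_{ijk} denote the area of triangle z_i z_j z_k. Then E₁₂ + E₂₃ + E₃₄ + E₁₄ − E₁₃ − E₂₄ ≥ 0, where E₁₂ = A₁₂₃·A₁₂₄·f·(a+b+e+d−2c), E₂₃ = A₁₂₃·A₂₃₄·d·(c+b+e+f−2a), E₃₄ = A₁₃₄·A₂₃₄·c·(a+e+d+b−2f), E₁₄ = A₁₂₄·A₁₃₄·a·(c+e+b+f−2d), E₁₃ = A₁₂₃·A₁₃₄·e·(a+c+d+f−2b), and E₂₄ = A₁₂₄·A₂₃₄·b·(c+d+f+a−2e). -/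

import Mathlib

open Real

/-- Unsigned area of the triangle with vertices `p`, `q`, `r` in the complex plane. -/
noncomputable def triArea (p q r : ℂ) : ℝ :=
  |((q - p) * (starRingEnd ℂ) (r - p)).im| / 2

private lemma abs_add_of_mul_nonneg {x y : ℝ} (h : 0 ≤ x * y) : |x + y| = |x| + |y| := by
  rcases le_total 0 x with hx | hx <;> rcases le_total 0 y with hy | hy
  · rw [abs_of_nonneg hx, abs_of_nonneg hy, abs_of_nonneg (by linarith)]
  · have hxy : x * y = 0 := le_antisymm (mul_nonpos_iff.mpr (Or.inl ⟨hx, hy⟩)) h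
    rcases mul_eq_zero.mp hxy with h0 | h0 <;> simp [h0]
  · have hxy : x * y = 0 := le_antisymm (mul_nonpos_iff.mpr (Or.inr ⟨hx, hy⟩)) h
    rcases mul_eq_zero.mp hxy with h0 | h0 <;> simp [h0]
  · rw [abs_of_nonpos hx, abs_of_nonpos hy, abs_of_nonpos (by linarith)]; ring

private lemma mul_nonpos_of_combo {s t F G : ℝ} (hs : 0 ≤ s) (ht : 0 ≤ t)
    (hst : s + t = 1) (h : s * F + t * G = 0) : F * G ≤ 0 := by
  rcases hs.eq_or_lt with hs0 | hs0
  · have hG : G = 0 := by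
      have ht1 : t = 1 := by linarith
      rw [← hs0, ht1] at h; linarith
    simp [hG]
  rcases ht.eq_or_lt with ht0 | ht0
  · have hF : F = 0 := by
      have hs1 : s = 1 := by linarith
      rw [← ht0, hs1] at h; linarith
    simp [hF]
  · have h2 : (s * F) * (t * G) = -(s * F) ^ 2 := by
      have : t * G = -(s * F) := by linarith
      rw [this]; ring
    nlinarith [sq_nonneg (s * F), mul_pos hs0 ht0]

set_option maxHeartbeats 1000000 in
private lemma key_ineq (a b c d e f p q r s : ℝ)
    (hp : 0 ≤ p) (hq : 0 ≤ q) (hr : 0 ≤ r) (hs : 0 ≤ s)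
    (hsum : p + r = q + s)
    (t1 : e ≤ c + d) (t2 : b ≤ a + c) (t3 : e ≤ a + f) (t4 : b ≤ d + f)
    (t5 : c + f ≤ b + e) (t6 : a + d ≤ b + e) :
    0 ≤ p*q*f*(a+b+e+d-2*c) + p*s*d*(c+b+e+f-2*a) + r*s*c*(a+e+d+b-2*f)
      + q*r*a*(c+e+b+f-2*d) - p*r*e*(a+c+d+f-2*b) - q*s*b*(c+d+f+a-2*e) := by
  have hp' : p = q + s - r := by linarith
  subst hp'
  have hL1 : (0:ℝ) ≤ c + d - e := by linarith
  have hL2 : (0:ℝ) ≤ a + c - b := by linarith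
  have hL3 : (0:ℝ) ≤ a + f - e := by linarith
  have hL4 : (0:ℝ) ≤ d + f - b := by linarith
  have hL12 : (0:ℝ) ≤ b + e - c - f := by linarith
  have hL14 : (0:ℝ) ≤ b + e - a - d := by linarith
  have hsr : (0:ℝ) ≤ s + r := by linarith
  have hqq : (0:ℝ) ≤ (q+s-r) + q := by linarith
  have hss : (0:ℝ) ≤ (q+s-r) + s := by linarith
  have hqr : (0:ℝ) ≤ q + r := by linarith
  have c1 := sq_nonneg (s*(c+d-e) - q*(a+f-e))
  have c2 := sq_nonneg (r*(a+c-b) - (q+s-r)*(d+f-b))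
  have c3 := mul_nonneg (mul_nonneg (mul_nonneg hr hs) hL1) hL2
  have c4 := mul_nonneg (mul_nonneg (mul_nonneg hp hs) hL1) hL4
  have c5 := mul_nonneg (mul_nonneg (mul_nonneg hq hr) hL2) hL3
  have c6 := mul_nonneg (mul_nonneg (mul_nonneg hp hq) hL3) hL4
  have c7 := mul_nonneg (mul_nonneg (mul_nonneg hs hsr) hL12) hL1
  have c8 := mul_nonneg (mul_nonneg (mul_nonneg hr hsr) hL12) hL2
  have c9 := mul_nonneg (mul_nonneg (mul_nonneg hq hqq) hL12) hL3
  have c10 := mul_nonneg (mul_nonneg (mul_nonneg hp hqq) hL12) hL4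
  have c11 := mul_nonneg (mul_nonneg (mul_nonneg hs hss) hL14) hL1
  have c12 := mul_nonneg (mul_nonneg (mul_nonneg hr hqr) hL14) hL2
  have c13 := mul_nonneg (mul_nonneg (mul_nonneg hq hqr) hL14) hL3
  have c14 := mul_nonneg (mul_nonneg (mul_nonneg hp hss) hL14) hL4
  have c15 := mul_nonneg (mul_nonneg (sq_nonneg ((q+s-r) + r)) hL12) hL14
  linarith [c1, c2, c3, c4, c5, c6, c7, c8, c9, c10, c11, c12, c13, c14, c15]

set_option maxHeartbeats 2000000 in
theorem E_inequality (z₁ z₂ z₃ z₄ : ℂ)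
    (h12 : z₁ ≠ z₂) (h13 : z₁ ≠ z₃) (h14 : z₁ ≠ z₄)
    (h23 : z₂ ≠ z₃) (h24 : z₂ ≠ z₄) (h34 : z₃ ≠ z₄)
    (hconvex : (segment ℝ z₁ z₃ ∩ segment ℝ z₂ z₄).Nonempty)
    (a b c d e f : ℝ)
    (ha : a = dist z₂ z₃) (hb : b = dist z₁ z₃) (hc : c = dist z₁ z₂)
    (hd : d = dist z₁ z₄) (he : e = dist z₂ z₄) (hf : f = dist z₃ z₄)
    (A₁₂₃ A₁₂₄ A₁₃₄ A₂₃₄ : ℝ)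
    (hA123 : A₁₂₃ = triArea z₁ z₂ z₃) (hA124 : A₁₂₄ = triArea z₁ z₂ z₄)
    (hA134 : A₁₃₄ = triArea z₁ z₃ z₄) (hA234 : A₂₃₄ = triArea z₂ z₃ z₄)
    (E₁₂ E₂₃ E₃₄ E₁₄ E₁₃ E₂₄ : ℝ)
    (hE12 : E₁₂ = A₁₂₃ * A₁₂₄ * f * (a + b + e + d - 2 * c))
    (hE23 : E₂₃ = A₁₂₃ * A₂₃₄ * d * (c + b + e + f - 2 * a))
    (hE34 : E₃₄ = A₁₃₄ * A₂₃₄ * c * (a + e + d + b - 2 * f))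
    (hE14 : E₁₄ = A₁₂₄ * A₁₃₄ * a * (c + e + b + f - 2 * d))
    (hE13 : E₁₃ = A₁₂₃ * A₁₃₄ * e * (a + c + d + f - 2 * b))
    (hE24 : E₂₄ = A₁₂₄ * A₂₃₄ * b * (c + d + f + a - 2 * e)) :
    0 ≤ E₁₂ + E₂₃ + E₃₄ + E₁₄ - E₁₃ - E₂₄ := by
  obtain ⟨w, hw13, hw24⟩ := hconvex
  obtain ⟨α, β, hα, hβ, hαβ, hw1⟩ := hw13
  obtain ⟨γ, δ, hγ, hδ, hγδ, hw2⟩ := hw24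
  have hβ' : β = 1 - α := by linarith
  have hδ' : δ = 1 - γ := by linarith
  subst hβ' hδ'
  have heq : α • z₁ + (1 - α) • z₃ = γ • z₂ + (1 - γ) • z₄ := by rw [hw1, hw2]
  have hre := congrArg Complex.re heq
  have him := congrArg Complex.im heq
  simp only [Complex.add_re, Complex.add_im, Complex.real_smul, Complex.mul_re,
    Complex.mul_im, Complex.ofReal_re, Complex.ofReal_im, zero_mul, mul_zero,
    sub_zero, zero_add, add_zero] at hre him
  have sign1 : 0 ≤ ((z₂ - z₁) * (starRingEnd ℂ) (z₃ - z₁)).im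
      * ((z₃ - z₁) * (starRingEnd ℂ) (z₄ - z₁)).im := by
    have hcomb : γ * (((z₃ - z₁) * (starRingEnd ℂ) (z₂ - z₁)).im)
        + (1 - γ) * (((z₃ - z₁) * (starRingEnd ℂ) (z₄ - z₁)).im) = 0 := by
      simp only [Complex.mul_im, Complex.conj_re, Complex.conj_im, Complex.sub_re,
        Complex.sub_im]
      linear_combination (-(z₃.im - z₁.im)) * hre + (z₃.re - z₁.re) * him
    have h1 := mul_nonpos_of_combo hγ (by linarith) (by ring) hcomb
    have h2 : ((z₃ - z₁) * (starRingEnd ℂ) (z₂ - z₁)).im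
        = -((z₂ - z₁) * (starRingEnd ℂ) (z₃ - z₁)).im := by
      simp only [Complex.mul_im, Complex.conj_re, Complex.conj_im, Complex.sub_re,
        Complex.sub_im]
      ring
    rw [h2] at h1
    nlinarith [h1]
  have sign2 : 0 ≤ ((z₂ - z₁) * (starRingEnd ℂ) (z₄ - z₁)).im
      * ((z₃ - z₂) * (starRingEnd ℂ) (z₄ - z₂)).im := by
    have hcomb : α * (((z₄ - z₂) * (starRingEnd ℂ) (z₁ - z₂)).im)
        + (1 - α) * (((z₄ - z₂) * (starRingEnd ℂ) (z₃ - z₂)).im) = 0 := by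
      simp only [Complex.mul_im, Complex.conj_re, Complex.conj_im, Complex.sub_re,
        Complex.sub_im]
      linear_combination (z₄.im - z₂.im) * hre + (-(z₄.re - z₂.re)) * him
    have h1 := mul_nonpos_of_combo hα (by linarith) (by ring) hcomb
    have h2 : ((z₄ - z₂) * (starRingEnd ℂ) (z₁ - z₂)).im
        = ((z₂ - z₁) * (starRingEnd ℂ) (z₄ - z₁)).im := by
      simp only [Complex.mul_im, Complex.conj_re, Complex.conj_im, Complex.sub_re,
        Complex.sub_im]
      ring
    have h3 : ((z₄ - z₂) * (starRingEnd ℂ) (z₃ - z₂)).im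
        = -((z₃ - z₂) * (starRingEnd ℂ) (z₄ - z₂)).im := by
      simp only [Complex.mul_im, Complex.conj_re, Complex.conj_im, Complex.sub_re,
        Complex.sub_im]
      ring
    rw [h2, h3] at h1
    nlinarith [h1]
  have hiden : ((z₂ - z₁) * (starRingEnd ℂ) (z₃ - z₁)).im
      + ((z₃ - z₁) * (starRingEnd ℂ) (z₄ - z₁)).im
      = ((z₂ - z₁) * (starRingEnd ℂ) (z₄ - z₁)).im
      + ((z₃ - z₂) * (starRingEnd ℂ) (z₄ - z₂)).im := by
    simp only [Complex.mul_im, Complex.conj_re, Complex.conj_im, Complex.sub_re,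
      Complex.sub_im]
    ring
  have hAsum : triArea z₁ z₂ z₃ + triArea z₁ z₃ z₄
      = triArea z₁ z₂ z₄ + triArea z₂ z₃ z₄ := by
    unfold triArea
    rw [← add_div, ← add_div, ← abs_add_of_mul_nonneg sign1,
      ← abs_add_of_mul_nonneg sign2, hiden]
  have hbseg : dist z₁ w + dist w z₃ = dist z₁ z₃ :=
    dist_add_dist_of_mem_segment ⟨α, 1 - α, hα, by linarith, by ring, hw1⟩
  have heseg : dist z₂ w + dist w z₄ = dist z₂ z₄ :=
    dist_add_dist_of_mem_segment ⟨γ, 1 - γ, hγ, by linarith, by ring, hw2⟩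
  have t1 : dist z₂ z₄ ≤ dist z₁ z₂ + dist z₁ z₄ := by
    have := dist_triangle z₂ z₁ z₄; rw [dist_comm z₂ z₁] at this; linarith
  have t2 : dist z₁ z₃ ≤ dist z₂ z₃ + dist z₁ z₂ := by
    have := dist_triangle z₁ z₂ z₃; linarith
  have t3 : dist z₂ z₄ ≤ dist z₂ z₃ + dist z₃ z₄ := dist_triangle z₂ z₃ z₄
  have t4 : dist z₁ z₃ ≤ dist z₁ z₄ + dist z₃ z₄ := by
    have := dist_triangle z₁ z₄ z₃; rw [dist_comm z₄ z₃] at this; linarith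
  have t5 : dist z₁ z₂ + dist z₃ z₄ ≤ dist z₁ z₃ + dist z₂ z₄ := by
    have h1 := dist_triangle z₁ w z₂
    have h2 := dist_triangle z₃ w z₄
    rw [dist_comm w z₂] at h1
    rw [dist_comm z₃ w] at h2
    linarith
  have t6 : dist z₂ z₃ + dist z₁ z₄ ≤ dist z₁ z₃ + dist z₂ z₄ := by
    have h1 := dist_triangle z₂ w z₃
    have h2 := dist_triangle z₁ w z₄
    linarith
  have hP : 0 ≤ triArea z₁ z₂ z₃ := div_nonneg (abs_nonneg _) (by norm_num)
  have hQ : 0 ≤ triArea z₁ z₂ z₄ := div_nonneg (abs_nonneg _) (by norm_num)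
  have hR : 0 ≤ triArea z₁ z₃ z₄ := div_nonneg (abs_nonneg _) (by norm_num)
  have hS : 0 ≤ triArea z₂ z₃ z₄ := div_nonneg (abs_nonneg _) (by norm_num)
  subst hA123 hA124 hA134 hA234 hE12 hE23 hE34 hE14 hE13 hE24 ha hb hc hd he hf
  have key := key_ineq (dist z₂ z₃) (dist z₁ z₃) (dist z₁ z₂) (dist z₁ z₄) (dist z₂ z₄)
    (dist z₃ z₄) (triArea z₁ z₂ z₃) (triArea z₁ z₂ z₄) (triArea z₁ z₃ z₄) (triArea z₂ z₃ z₄)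
    hP hQ hR hS hAsum t1 t2 t3 t4 t5 t6
  exact key
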